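/- Let R(x,x') be a one-directional difference bounds constraint over N variables, let n ≥ 1, and let ρ be an extremal path in the n-times unfolding G_R^n. Then there exist a path ρ' compatible with ρ (same first vertex, same last vertex, and w(ρ') ≤ w(ρ)) and a biquadratic path scheme σ.λ*.σ' such that ρ' ∈ ⟦σ.λ*.σ'⟧. -/

import Mathlib

/- ## Difference bounds constraints and their relations -/

/-- Valuations of `N` integer variables. -/
abbrev Val (N : ℕ) := Fin N → ℤ

/-- An atomic proposition `u - v ≤ c` where `u, v` range over the unprimed
(`Sum.inl`) and primed (`Sum.inr`) variables. -/
abbrev Atom (N : ℕ) := (Fin N ⊕ Fin N) × (Fin N ⊕ Fin N) × ℤ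

/-- A vertex of an unfolded constraint graph: a position together with a variable. -/
abbrev Vtx (N : ℕ) := ℤ × Fin N

/-- A difference bounds constraint: a finite conjunction of atomic propositions. -/
structure DBC (N : ℕ) where
  atoms : Finset (Atom N)

/-- A path in an unfolded constraint graph: a first vertex followed by a list of
steps, each carrying a weight and a target vertex. -/
structure UPath (N : ℕ) where
  first : Vtx N
  steps : List (ℤ × Vtx N)

variable {N : ℕ}

def interp (ν ν' : Val N) : Fin N ⊕ Fin N → ℤ
  | Sum.inl i => ν i
  | Sum.inr i => ν' i

/-- The relation on valuations defined by a difference bounds constraint. -/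
def DBC.rel (R : DBC N) (ν ν' : Val N) : Prop :=
  ∀ a ∈ R.atoms, interp ν ν' a.1 - interp ν ν' a.2.1 ≤ a.2.2

/-- Relational composition. -/
def relComp (P Q : Val N → Val N → Prop) (ν ν' : Val N) : Prop :=
  ∃ μ, P ν μ ∧ Q μ ν'

/-- `n`-fold relational composition, with `relPow P 0` the identity relation. -/
def relPow (P : Val N → Val N → Prop) : ℕ → Val N → Val N → Prop
  | 0 => Eq
  | n + 1 => relComp P (relPow P n)

/-- A DB constraint is balanced when `x i - x j ≤ c` is a conjunct iff
`x' i - x' j ≤ c` is a conjunct. -/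
def DBC.Balanced (R : DBC N) : Prop :=
  ∀ (i j : Fin N) (c : ℤ),
    (Sum.inl i, Sum.inl j, c) ∈ R.atoms ↔ (Sum.inr i, Sum.inr j, c) ∈ R.atoms

/-- Forward one-directional: every atom is of the form `x i - x' j ≤ c`. -/
def DBC.IsFw (R : DBC N) : Prop :=
  ∀ a ∈ R.atoms, ∃ (i j : Fin N) (c : ℤ), a = (Sum.inl i, Sum.inr j, c)

/-- Backward one-directional: every atom is of the form `x' i - x j ≤ c`. -/
def DBC.IsBw (R : DBC N) : Prop :=
  ∀ a ∈ R.atoms, ∃ (i j : Fin N) (c : ℤ), a = (Sum.inr i, Sum.inl j, c)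

def DBC.IsOneDirectional (R : DBC N) : Prop := R.IsFw ∨ R.IsBw

/- ## Unfolded constraint graphs -/

/-- The endpoint of an atom placed at copy `p` of the unfolding: unprimed
variables live at position `p`, primed ones at position `p + 1`. -/
def endpt (p : ℤ) : Fin N ⊕ Fin N → Vtx N
  | Sum.inl i => (p, i)
  | Sum.inr i => (p + 1, i)

/-- Edge of the unfolding contributed by copy `p` of the constraint graph. -/
def DBC.EdgeAt (R : DBC N) (p : ℤ) (u v : Vtx N) (c : ℤ) : Prop :=
  ∃ s t, (s, t, c) ∈ R.atoms ∧ u = endpt p s ∧ v = endpt p t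

/-- Edge of the bi-infinite unfolding. -/
def DBC.Edge (R : DBC N) (u v : Vtx N) (c : ℤ) : Prop :=
  ∃ p : ℤ, R.EdgeAt p u v c

/-- Edge of the `n`-times unfolding `G_R^n` (copies `0, …, n-1`). -/
def DBC.EdgeN (R : DBC N) (n : ℕ) (u v : Vtx N) (c : ℤ) : Prop :=
  ∃ p : ℤ, 0 ≤ p ∧ p < (n : ℤ) ∧ R.EdgeAt p u v c

namespace UPath

/-- The list of vertices traversed by a path. -/
def vertices (ρ : UPath N) : List (Vtx N) := ρ.first :: ρ.steps.map Prod.snd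

/-- The last vertex of a path. -/
def last (ρ : UPath N) : Vtx N := (ρ.steps.map Prod.snd).getLastD ρ.first

/-- The weight of a path: the sum of its edge weights. -/
def weight (ρ : UPath N) : ℤ := (ρ.steps.map Prod.fst).sum

def posList (ρ : UPath N) : List ℤ := ρ.vertices.map Prod.fst

/-- The set of positions of the vertices of a path. -/
def posFinset (ρ : UPath N) : Finset ℤ := ρ.posList.toFinset

theorem posFinset_nonempty (ρ : UPath N) : ρ.posFinset.Nonempty := by
  refine ⟨ρ.first.1, ?_⟩
  simp [posFinset, posList, vertices]

/-- The extent of a path: the difference between its maximal and minimal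
position. -/
def extent (ρ : UPath N) : ℤ :=
  ρ.posFinset.max' ρ.posFinset_nonempty - ρ.posFinset.min' ρ.posFinset_nonempty

/-- The list of variables traversed by a path. -/
def varList (ρ : UPath N) : List (Fin N) := ρ.vertices.map Prod.snd

/-- The steps form a chain of edges w.r.t. the edge relation `E`. -/
def EdgeChain (E : Vtx N → Vtx N → ℤ → Prop) : Vtx N → List (ℤ × Vtx N) → Prop
  | _, [] => True
  | u, s :: rest => E u s.2 s.1 ∧ EdgeChain E s.2 rest

/-- The path lies in the bi-infinite unfolding of the constraint graph of `R`. -/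
def InUnf (R : DBC N) (ρ : UPath N) : Prop := EdgeChain R.Edge ρ.first ρ.steps

/-- The path lies in the `n`-times unfolding `G_R^n`. -/
def InUnfN (R : DBC N) (n : ℕ) (ρ : UPath N) : Prop :=
  EdgeChain (R.EdgeN n) ρ.first ρ.steps

/-- Concatenation (the caller must ensure `π.first = ρ.last` for this to be a
genuine path concatenation). -/
def append (ρ π : UPath N) : UPath N := ⟨ρ.first, ρ.steps ++ π.steps⟩

/-- Shift a path by `k` positions. -/
def shift (k : ℤ) (ρ : UPath N) : UPath N :=
  ⟨(ρ.first.1 + k, ρ.first.2), ρ.steps.map fun s => (s.1, (s.2.1 + k, s.2.2))⟩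

/-- Concatenation with implicit shifting: `π` is shifted so that its first
vertex is at the position of the last vertex of `ρ`. -/
def glue (ρ π : UPath N) : UPath N := ρ.append (shift (ρ.last.1 - π.first.1) π)

/-- `k`-fold concatenation of a (repeating) path with itself, each copy shifted
so that its first vertex coincides with the last vertex of the previous copy. -/
def pow (μ : UPath N) : ℕ → UPath N
  | 0 => ⟨μ.first, []⟩
  | k + 1 => (pow μ k).glue μ

def IsVertical (ρ : UPath N) : Prop := ρ.last.1 = ρ.first.1

def IsForward (ρ : UPath N) : Prop := ρ.first.1 < ρ.last.1

def IsBackward (ρ : UPath N) : Prop := ρ.last.1 < ρ.first.1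

/-- A path is repeating if its endpoints are copies of the same variable at
different positions. -/
def IsRepeating (ρ : UPath N) : Prop := ρ.first.1 ≠ ρ.last.1 ∧ ρ.first.2 = ρ.last.2

/-- Relative length: the absolute difference of the first and last positions. -/
def relLen (ρ : UPath N) : ℤ := |ρ.last.1 - ρ.first.1|

/-- Right corner of some extent `d`: a nonempty vertical path whose positions
are exactly `{k, …, k+d}` where `k` is its first (= last) position. -/
def IsRightCorner (ρ : UPath N) : Prop :=
  ρ.steps ≠ [] ∧ ρ.last.1 = ρ.first.1 ∧
  ∃ d : ℕ, ρ.posFinset = Finset.Icc ρ.first.1 (ρ.first.1 + (d : ℤ))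

/-- Left corner of some extent `d`: positions exactly `{k−d, …, k}`. -/
def IsLeftCorner (ρ : UPath N) : Prop :=
  ρ.steps ≠ [] ∧ ρ.last.1 = ρ.first.1 ∧
  ∃ d : ℕ, ρ.posFinset = Finset.Icc (ρ.first.1 - (d : ℤ)) ρ.first.1

def IsCorner (ρ : UPath N) : Prop := ρ.IsRightCorner ∨ ρ.IsLeftCorner

/-- A corner is basic if its start/end position does not occur among the
positions of its intermediate vertices. -/
def IsBasic (ρ : UPath N) : Prop :=
  ∀ s ∈ ρ.steps.dropLast, s.2.1 ≠ ρ.first.1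

/-- A long corner: a corner of extent exceeding `N²`. -/
def IsLongCorner (ρ : UPath N) : Prop := ρ.IsCorner ∧ (N : ℤ) ^ 2 < ρ.extent

/-- An lb-corner: a corner that is both long and basic. -/
def IsLBCorner (ρ : UPath N) : Prop := ρ.IsLongCorner ∧ ρ.IsBasic

/-- `θ` is a (contiguous) subpath of `ρ`. -/
def IsSubpath (θ ρ : UPath N) : Prop :=
  ∃ pre post, ρ.steps = pre ++ θ.steps ++ post ∧ θ.first = (UPath.mk ρ.first pre).last

/-- A path is essential if its traversed variables are pairwise distinct,
except that the first and the last variable may coincide. -/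
def IsEssential (ρ : UPath N) : Prop :=
  ∀ (a b : ℕ) (ha : a < ρ.varList.length) (hb : b < ρ.varList.length),
    a < b → ρ.varList.get ⟨a, ha⟩ = ρ.varList.get ⟨b, hb⟩ →
      a = 0 ∧ b = ρ.varList.length - 1

/-- An extremal path of `G_R^n`: both endpoints are at position `0` or `n`. -/
def IsExtremalIn (n : ℕ) (ρ : UPath N) : Prop :=
  (ρ.first.1 = 0 ∨ ρ.first.1 = (n : ℤ)) ∧ (ρ.last.1 = 0 ∨ ρ.last.1 = (n : ℤ))

/-- `ρ'` is compatible with `ρ`: same first vertex, same last vertex and weight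
not greater than that of `ρ`. -/
def Compatible (ρ' ρ : UPath N) : Prop :=
  ρ'.first = ρ.first ∧ ρ'.last = ρ.last ∧ ρ'.weight ≤ ρ.weight

/-- A path in `G_R^n` is normalized if none of its subpaths traversing only
positions in `{N², …, n−N²}` is a long corner. -/
def IsNormalized (n : ℕ) (ρ : UPath N) : Prop :=
  ∀ θ : UPath N, θ.IsSubpath ρ →
    θ.posFinset ⊆ Finset.Icc ((N : ℤ) ^ 2) ((n : ℤ) - (N : ℤ) ^ 2) →
    ¬ θ.IsLongCorner

end UPath

/- ## UPath schemes -/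

/-- `σ.λ*.σ'` is a path scheme: `λ` is empty or an essential repeating path,
the variables match up for concatenation, and `σ.λ.σ'` is a non-empty path. -/
def IsSchemeTriple (σ lam σ' : UPath N) : Prop :=
  (lam.steps = [] ∨ (lam.IsEssential ∧ lam.IsRepeating)) ∧
  lam.first.2 = σ.last.2 ∧ σ'.first.2 = lam.last.2 ∧
  (σ.glue (lam.glue σ')).steps ≠ []

/-- The element `σ.λ^m.σ'` of the set of paths denoted by the scheme `σ.λ*.σ'`. -/
def schemeElem (σ lam σ' : UPath N) (m : ℕ) : UPath N :=
  σ.glue ((lam.pow m).glue σ')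

/-- Shape of the `λ` component of a scheme of the class `Π_{ijkpq}`:
a path `x_k^(0) → … → x_k^(p)` of length `p` in the unfolding. -/
def LamShape (R : DBC N) (k : Fin N) (p : ℕ) (lam : UPath N) : Prop :=
  lam.InUnf R ∧ lam.first = ((0 : ℤ), k) ∧ lam.last = ((p : ℤ), k) ∧
  lam.steps.length = p

/-- Shape of the `σ, σ'` components of a scheme of the class `Π_{ijkpq}`:
`σ : x_i^(0) → … → x_k^(r)` and `σ' : x_k^(r) → … → x_j^(q)` for some
`0 ≤ r ≤ q`, with `|σ.σ'| = q`. -/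
def SigmaShape (R : DBC N) (i j k : Fin N) (q : ℕ) (σ σ' : UPath N) : Prop :=
  ∃ r : ℕ, r ≤ q ∧ σ.InUnf R ∧ σ'.InUnf R ∧
    σ.first = ((0 : ℤ), i) ∧ σ.last = ((r : ℤ), k) ∧
    σ'.first = ((r : ℤ), k) ∧ σ'.last = ((q : ℤ), j) ∧
    σ.steps.length + σ'.steps.length = q

/-- Membership of the scheme `σ.λ*.σ'` in the class `Π_{ijkpq}`. -/
def InPi (R : DBC N) (i j k : Fin N) (p q : ℕ) (σ lam σ' : UPath N) : Prop :=
  IsSchemeTriple σ lam σ' ∧ LamShape R k p lam ∧ SigmaShape R i j k q σ σ'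

/-- The set `S_ij` of quadruples `(|σ.σ'|, |λ|, w(σ.σ'), w(λ))` arising from the
minimal representative schemes `θ_{ijkpq}` of the nonempty classes `Π_{ijkpq}`. -/
def Sset (R : DBC N) (i j : Fin N) : Set (ℕ × ℕ × ℤ × ℤ) :=
  { t | ∃ (k : Fin N) (p q : ℕ) (σ lam σ' : UPath N),
      p ≤ N ∧ q ≤ N ^ 4 ∧ 0 < p + q ∧
      (∃ ν μ ν' : UPath N, InPi R i j k p q ν μ ν') ∧
      LamShape R k p lam ∧
      (∀ lam', LamShape R k p lam' → lam.weight ≤ lam'.weight) ∧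
      SigmaShape R i j k q σ σ' ∧
      (∀ σ₁ σ₁', SigmaShape R i j k q σ₁ σ₁' →
        σ.weight + σ'.weight ≤ σ₁.weight + σ₁'.weight) ∧
      t = (q, p, σ.weight + σ'.weight, lam.weight) }

/- ## Segments -/

/-- An edge from `u` to `v` has both endpoints at positions within `{p, …, q}`. -/
def StepInRange (p q : ℤ) (u v : Vtx N) : Prop :=
  p ≤ u.1 ∧ u.1 ≤ q ∧ p ≤ v.1 ∧ v.1 ≤ q

/-- `ξ` is an element of `segments(ρ, p, q)`: a nonempty maximal subpath of `ρ`
whose positions lie within `{p, …, q}`, immediately preceded and followed (if at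
all) by edges not lying within `{p, …, q}`. -/
def IsSegmentOf (ρ : UPath N) (p q : ℤ) (ξ : UPath N) : Prop :=
  ξ.steps ≠ [] ∧
  ∃ pre post, ρ.steps = pre ++ ξ.steps ++ post ∧
    ξ.first = (UPath.mk ρ.first pre).last ∧
    ξ.posFinset ⊆ Finset.Icc p q ∧
    (∀ pre' c u, pre = pre' ++ [(c, u)] →
      ¬ StepInRange p q (UPath.mk ρ.first pre').last u) ∧
    (∀ c v post', post = (c, v) :: post' → ¬ StepInRange p q ξ.last v)

/- ## The strengthened relation and one-directional approximations -/

/-- `S_fw`: the valuations `ν` such that `∃ ν'. (ν,ν') ∈ R^{N²}`. -/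
def Sfw (R : DBC N) (ν : Val N) : Prop := ∃ ν', relPow R.rel (N ^ 2) ν ν'

/-- `S_bw`: the valuations `ν'` such that `∃ ν. (ν,ν') ∈ R^{N²}`. -/
def Sbw (R : DBC N) (ν' : Val N) : Prop := ∃ ν, relPow R.rel (N ^ 2) ν ν'

/-- The strengthened relation `R_s = R ∧ S_fw(x) ∧ S_bw(x')`. -/
def Rs (R : DBC N) (ν ν' : Val N) : Prop := R.rel ν ν' ∧ Sfw R ν ∧ Sbw R ν'

/-- `R_fw`: the strongest forward one-directional DB relation implied by `R_s`. -/
def Rfw (R : DBC N) (ν ν' : Val N) : Prop :=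
  ∀ (i j : Fin N) (c : ℤ), (∀ μ μ', Rs R μ μ' → μ i - μ' j ≤ c) → ν i - ν' j ≤ c

/-- `R_bw`: the strongest backward one-directional DB relation implied by `R_s`. -/
def Rbw (R : DBC N) (ν ν' : Val N) : Prop :=
  ∀ (i j : Fin N) (c : ℤ), (∀ μ μ', Rs R μ μ' → μ' i - μ j ≤ c) → ν' i - ν j ≤ c

/- ## Corner decompositions -/

/-- The pumped path `η.μ^k.τ.μ'^k.η'`. -/
def pumped (η μ τ μ' η' : UPath N) (k : ℕ) : UPath N :=
  η.glue ((μ.pow k).glue (τ.glue ((μ'.pow k).glue η')))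

/-- The decomposition `ρ' = η.μ.τ.μ'.η'` of a right corner as in the corner
shortening / decomposition lemma. -/
def DecompRight (ρ' : UPath N) : Prop :=
  ∃ η μ τ μ' η' : UPath N,
    ρ' = η.append (μ.append (τ.append (μ'.append η'))) ∧
    μ.first = η.last ∧ τ.first = μ.last ∧ μ'.first = τ.last ∧ η'.first = μ'.last ∧
    μ.IsForward ∧ μ.IsRepeating ∧ μ'.IsBackward ∧ μ'.IsRepeating ∧
    τ.IsRightCorner ∧
    η.relLen = η'.relLen ∧
    1 ≤ μ.relLen ∧ μ.relLen = μ'.relLen ∧ μ.relLen ≤ (N : ℤ) ^ 2 ∧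
    μ.weight + μ'.weight < 0 ∧
    ∀ k : ℕ,
      (pumped η μ τ μ' η' k).IsRightCorner ∧
      (∀ θ : UPath N, θ.IsSubpath (η.glue (μ.pow k)) → ¬ θ.IsLBCorner) ∧
      (∀ θ : UPath N, θ.IsSubpath ((μ'.pow k).glue η') → ¬ θ.IsLBCorner)

/-- The decomposition `ρ' = η.μ.τ.μ'.η'` of a left corner as in the corner
shortening / decomposition lemma. -/
def DecompLeft (ρ' : UPath N) : Prop :=
  ∃ η μ τ μ' η' : UPath N,
    ρ' = η.append (μ.append (τ.append (μ'.append η'))) ∧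
    μ.first = η.last ∧ τ.first = μ.last ∧ μ'.first = τ.last ∧ η'.first = μ'.last ∧
    μ.IsBackward ∧ μ.IsRepeating ∧ μ'.IsForward ∧ μ'.IsRepeating ∧
    τ.IsLeftCorner ∧
    η.relLen = η'.relLen ∧
    1 ≤ μ.relLen ∧ μ.relLen = μ'.relLen ∧ μ.relLen ≤ (N : ℤ) ^ 2 ∧
    μ.weight + μ'.weight < 0 ∧
    ∀ k : ℕ,
      (pumped η μ τ μ' η' k).IsLeftCorner ∧
      (∀ θ : UPath N, θ.IsSubpath (η.glue (μ.pow k)) → ¬ θ.IsLBCorner) ∧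
      (∀ θ : UPath N, θ.IsSubpath ((μ'.pow k).glue η') → ¬ θ.IsLBCorner)

/- ## Balanced closure -/

/-- Swap an unprimed-unprimed atom with its primed-primed counterpart. -/
def flipAtom : Atom N → Atom N
  | (Sum.inl i, Sum.inl j, c) => (Sum.inr i, Sum.inr j, c)
  | (Sum.inr i, Sum.inr j, c) => (Sum.inl i, Sum.inl j, c)
  | a => a

/-- The balanced closure `R_b` of a DB constraint `R`. -/
def DBC.balClosure (R : DBC N) : DBC N := ⟨R.atoms ∪ R.atoms.image flipAtom⟩


namespace S1
variable {N : ℕ}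

abbrev St (N : ℕ) := ℤ × Fin N

def lastOf (u : Fin N) : List (St N) → Fin N
  | [] => u
  | s :: r => lastOf s.2 r

def AChain (E : Fin N → Fin N → ℤ → Prop) : Fin N → List (St N) → Prop
  | _, [] => True
  | u, s :: r => E u s.2 s.1 ∧ AChain E s.2 r

def wt (l : List (St N)) : ℤ := (l.map Prod.fst).sum

def vl (u : Fin N) (l : List (St N)) : List (Fin N) := u :: l.map Prod.snd

@[simp] lemma lastOf_nil (u : Fin N) : lastOf u ([] : List (St N)) = u := rfl
@[simp] lemma lastOf_cons (u : Fin N) (s : St N) (r : List (St N)) :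
    lastOf u (s :: r) = lastOf s.2 r := rfl

lemma lastOf_append (u : Fin N) (a b : List (St N)) :
    lastOf u (a ++ b) = lastOf (lastOf u a) b := by
  induction a generalizing u with
  | nil => rfl
  | cons s r ih => simp [ih]

@[simp] lemma AChain_nil (E) (u : Fin N) : AChain E u [] := trivial

lemma AChain_append (E) (u : Fin N) (a b : List (St N)) :
    AChain E u (a ++ b) ↔ AChain E u a ∧ AChain E (lastOf u a) b := by
  induction a generalizing u with
  | nil => simp [AChain]
  | cons s r ih => simp [AChain, ih, and_assoc]

@[simp] lemma wt_nil : wt ([] : List (St N)) = 0 := rfl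
@[simp] lemma wt_cons (s : St N) (r : List (St N)) : wt (s :: r) = s.1 + wt r := rfl

lemma wt_append (a b : List (St N)) : wt (a ++ b) = wt a + wt b := by
  simp [wt]

lemma mem_vl_iff (v u : Fin N) (l : List (St N)) :
    v ∈ vl u l ↔ v = u ∨ v ∈ l.map Prod.snd := by simp [vl]

lemma lastOf_mem_vl (u : Fin N) (l : List (St N)) : lastOf u l ∈ vl u l := by
  induction l generalizing u with
  | nil => exact List.mem_cons_self
  | cons s r ih =>
    rcases (mem_vl_iff _ _ _).1 (ih s.2) with h | h
    · rw [mem_vl_iff]; right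
      rw [lastOf_cons, h]
      exact List.mem_cons_self
    · rw [mem_vl_iff]; right
      rw [lastOf_cons]
      exact List.mem_cons_of_mem _ h

lemma mem_vl_append_left (v u : Fin N) (a b : List (St N)) (h : v ∈ vl u a) :
    v ∈ vl u (a ++ b) := by
  rcases (mem_vl_iff _ _ _).1 h with h | h
  · rw [mem_vl_iff]; left; exact h
  · rw [mem_vl_iff]; right
    rw [List.map_append]
    exact List.mem_append_left _ h

lemma mem_vl_append_right (v u : Fin N) (a b : List (St N))
    (h : v ∈ vl (lastOf u a) b) : v ∈ vl u (a ++ b) := by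
  rcases (mem_vl_iff _ _ _).1 h with h | h
  · subst h; exact mem_vl_append_left _ _ _ _ (lastOf_mem_vl u a)
  · rw [mem_vl_iff]; right
    rw [List.map_append]
    exact List.mem_append_right _ h

/-- decomposition of membership in `vl u (a ++ b)`. -/
lemma mem_vl_append_iff (v u : Fin N) (a b : List (St N)) :
    v ∈ vl u (a ++ b) ↔ v ∈ vl u a ∨ v ∈ b.map Prod.snd := by
  simp only [vl, List.map_append, List.mem_cons, List.mem_append, or_assoc]

/-- simple cycle at `u` -/
def IsSC (E : Fin N → Fin N → ℤ → Prop) (u : Fin N) (Y : List (St N)) : Prop :=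
  Y ≠ [] ∧ AChain E u Y ∧ lastOf u Y = u ∧ (vl u Y).dropLast.Nodup

lemma IsSC.length_le_N [NeZero N] {E} {u : Fin N} {Y : List (St N)} (h : IsSC E u Y) :
    Y.length ≤ N := by
  have h4 := h.2.2.2
  have : (vl u Y).dropLast.length ≤ N := by
    simpa using h4.length_le_card
  simpa [vl] using this

end S1

namespace S1X
/- first-duplicate lemma -/
lemma firstDup {α : Type*} [DecidableEq α] :
    ∀ (t : List α), ¬ t.Nodup → ∃ t₁ x t₂, t = t₁ ++ x :: t₂ ∧ t₁.Nodup ∧ x ∈ t₁ := by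
  intro t
  induction t with
  | nil => intro h; exact absurd List.nodup_nil h
  | cons y r ih =>
    intro h
    by_cases hr : r.Nodup
    · have hy : y ∈ r := by
        by_contra hy
        exact h (List.nodup_cons.mpr ⟨hy, hr⟩)
      obtain ⟨r₁, r₂, rfl⟩ := List.mem_iff_append.mp hy
      have hnd := List.nodup_append.mp hr
      have hy1 : y ∉ r₁ := fun hmem => hnd.2.2 y hmem y List.mem_cons_self rfl
      exact ⟨y :: r₁, y, r₂, by simp, List.nodup_cons.mpr ⟨hy1, hnd.1⟩, List.mem_cons_self⟩
    · obtain ⟨t₁, x, t₂, heq, h₁, hx⟩ := ih hr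
      by_cases hyr : y ∈ t₁
      · obtain ⟨s₁, s₂, rfl⟩ := List.mem_iff_append.mp hyr
        have hnd := List.nodup_append.mp h₁
        have hy1 : y ∉ s₁ := fun hmem => hnd.2.2 y hmem y List.mem_cons_self rfl
        refine ⟨y :: s₁, y, s₂ ++ x :: t₂, ?_, List.nodup_cons.mpr ⟨hy1, hnd.1⟩,
          List.mem_cons_self⟩
        simp [heq]
      · exact ⟨y :: t₁, x, t₂, by simp [heq], List.nodup_cons.mpr ⟨hyr, h₁⟩,
          List.mem_cons_of_mem _ hx⟩

lemma take_len_succ {α : Type*} (s₁ : List α) (x : α) (rest : List α) :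
    (s₁ ++ x :: rest).take (s₁.length + 1) = s₁ ++ [x] := by
  induction s₁ with
  | nil => simp
  | cons a s ih => simp [ih]

end S1X

namespace S1
variable {N : ℕ}

lemma lastOf_eq_getLastD (u d : Fin N) (l : List (St N)) :
    lastOf u l = (vl u l).getLastD d := by
  induction l generalizing u with
  | nil => simp [vl]
  | cons s r ih =>
    rw [lastOf_cons, ih s.2]
    have h1 : vl u (s :: r) = u :: vl s.2 r := by simp [vl]
    rw [h1, List.getLastD_cons]
    have h2 : vl s.2 r = s.2 :: r.map Prod.snd := rfl
    rw [h2, List.getLastD_cons, List.getLastD_cons]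

lemma vl_take (u : Fin N) (l : List (St N)) (i : ℕ) :
    vl u (l.take i) = (vl u l).take (i + 1) := by
  simp [vl, List.map_take]

lemma vl_drop_eq (u : Fin N) (X Y : List (St N)) :
    vl (lastOf u X) Y = (vl u (X ++ Y)).drop X.length := by
  induction X generalizing u with
  | nil => simp
  | cons s r ih =>
    rw [lastOf_cons, ih s.2]
    have : vl u ((s :: r) ++ Y) = u :: vl s.2 (r ++ Y) := by simp [vl]
    rw [this]
    simp

theorem firstcyc (E : Fin N → Fin N → ℤ → Prop) (hN : 1 ≤ N) (u : Fin N)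
    (l : List (St N)) (hch : AChain E u l) (hlen : N ≤ l.length) :
    ∃ X Y Z, l = X ++ Y ++ Z ∧ (X ++ Y).length ≤ N ∧ IsSC E (lastOf u X) Y := by
  have : NeZero N := ⟨by omega⟩
  set t : List (Fin N) := vl u (l.take N) with ht
  have htlen : t.length = N + 1 := by
    simp [ht, vl, List.length_take, Nat.min_eq_left hlen]
  have hnd : ¬ t.Nodup := by
    intro hnd
    have h := hnd.length_le_card
    rw [htlen, Fintype.card_fin] at h
    omega
  obtain ⟨t₁, x, t₂, hteq, ht₁nd, hxt₁⟩ := S1X.firstDup t hnd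
  obtain ⟨s₁, s₂, hs⟩ := List.mem_iff_append.mp hxt₁
  set a := s₁.length with ha
  set b := t₁.length with hb
  have hab : a < b := by
    rw [hb, hs, ha, List.length_append, List.length_cons]
    omega
  have hbN : b ≤ N := by
    have : t.length = t₁.length + (t₂.length + 1) := by rw [hteq]; simp
    omega
  -- take-prefix facts
  have htake_a : t.take (a + 1) = s₁ ++ [x] := by
    rw [hteq, hs]
    have : (s₁ ++ x :: s₂) ++ x :: t₂ = s₁ ++ x :: (s₂ ++ x :: t₂) := by simp
    rw [this]
    exact S1X.take_len_succ s₁ x _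
  have htake_b : t.take (b + 1) = t₁ ++ [x] := by
    rw [hteq]; exact S1X.take_len_succ t₁ x t₂
  -- vertex-list of prefixes of l
  have hvla : vl u (l.take a) = s₁ ++ [x] := by
    rw [← htake_a, ht]
    rw [show l.take a = (l.take N).take a from by rw [List.take_take, Nat.min_eq_left (by omega)]]
    exact vl_take u (l.take N) a
  have hvlb : vl u (l.take b) = t₁ ++ [x] := by
    rw [← htake_b, ht]
    rw [show l.take b = (l.take N).take b from by rw [List.take_take, Nat.min_eq_left hbN]]
    exact vl_take u (l.take N) b
  have hblen : b ≤ l.length := le_trans hbN hlen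
  set X := l.take a with hX
  set Y := (l.take b).drop a with hY
  set Z := l.drop b with hZ
  have hXlen : X.length = a := by rw [hX, List.length_take]; omega
  have hXY : X ++ Y = l.take b := by
    rw [hX, hY, show l.take a = (l.take b).take a from by
      rw [List.take_take, Nat.min_eq_left (le_of_lt hab)]]
    exact List.take_append_drop a (l.take b)
  have hlXYZ : l = X ++ Y ++ Z := by rw [hXY, hZ]; exact (List.take_append_drop b l).symm
  have hXYlen : (X ++ Y).length ≤ N := by rw [hXY, List.length_take]; omega
  -- base vertex
  have hbase_a : lastOf u X = x := by
    rw [lastOf_eq_getLastD u u X, hvla]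
    exact List.getLastD_concat
  have hbase_b : lastOf u (X ++ Y) = x := by
    rw [lastOf_eq_getLastD u u (X ++ Y), hXY, hvlb]
    exact List.getLastD_concat
  have hYne : Y ≠ [] := by
    have : Y.length = b - a := by
      rw [hY, List.length_drop, List.length_take]; omega
    intro hnil; rw [hnil] at this; simp at this; omega
  refine ⟨X, Y, Z, hlXYZ, hXYlen, hYne, ?_, ?_, ?_⟩
  · -- chain
    rw [hlXYZ, List.append_assoc] at hch
    have := ((AChain_append E u X (Y ++ Z)).1 hch).2
    exact ((AChain_append E _ Y Z).1 this).1
  · -- closed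
    rw [← lastOf_append, hbase_b, hbase_a]
  · -- internal nodup
    have hvly : vl (lastOf u X) Y = (vl u (X ++ Y)).drop X.length := vl_drop_eq u X Y
    rw [hXY, hvlb, hXlen, hs] at hvly
    have : (s₁ ++ x :: s₂) ++ [x] = s₁ ++ (x :: (s₂ ++ [x])) := by simp
    rw [this, List.drop_left' (by rw [ha])] at hvly
    rw [hvly]
    have hdl : (x :: (s₂ ++ [x])).dropLast = x :: s₂ := by
      have : x :: (s₂ ++ [x]) = (x :: s₂) ++ [x] := by simp
      rw [this, List.dropLast_concat]
    rw [hdl]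
    have : (x :: s₂).Sublist t₁ := by
      rw [hs]
      exact List.sublist_append_right s₁ (x :: s₂)
    exact ht₁nd.sublist this

end S1

namespace S1
variable {N : ℕ}

inductive Scan (E : Fin N → Fin N → ℤ → Prop) :
    Fin N → List (St N) → List (List (St N) × List (St N)) → List (St N) → Prop
  | nil (u l) : Scan E u l [] l
  | cons {u l A Y rest ys B} :
      l = A ++ (Y ++ rest) →
      (A ++ Y).length ≤ N →
      IsSC E (lastOf u A) Y →
      Scan E (lastOf u (A ++ Y)) rest ys B →
      Scan E u l ((A, Y) :: ys) B

theorem scan_exists (E : Fin N → Fin N → ℤ → Prop) (hN : 1 ≤ N) :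
    ∀ (t : ℕ) (u : Fin N) (l : List (St N)), AChain E u l → t * N ≤ l.length →
      ∃ ys B, Scan E u l ys B ∧ ys.length = t := by
  intro t
  induction t with
  | zero => intro u l _ _; exact ⟨[], l, Scan.nil u l, rfl⟩
  | succ t ih =>
    intro u l hch hlen
    obtain ⟨X, Y, Z, hl, hXY, hsc⟩ := firstcyc E hN u l hch (by nlinarith)
    have hZch : AChain E (lastOf u (X ++ Y)) Z := by
      rw [hl] at hch
      exact ((AChain_append E u (X ++ Y) Z).1 hch).2
    have hZlen : t * N ≤ Z.length := by
      have : l.length = (X ++ Y).length + Z.length := by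
        rw [hl]; simp [List.length_append]; omega
      have h2 : (t + 1) * N = t * N + N := by ring
      omega
    obtain ⟨ys, B, hscan, hys⟩ := ih (lastOf u (X ++ Y)) Z hZch hZlen
    exact ⟨(X, Y) :: ys, B, Scan.cons (by rw [hl, List.append_assoc]) hXY hsc hscan,
      by simp [hys]⟩

def cutL (ys : List (List (St N) × List (St N))) (a b : ℕ) : ℕ :=
  (((ys.take b).drop a).map fun p => p.2.length).sum

def cutW (ys : List (List (St N) × List (St N))) (a b : ℕ) : ℤ :=
  (((ys.take b).drop a).map fun p => wt p.2).sum

@[simp] lemma cutL_nil (a b : ℕ) : cutL ([] : List (List (St N) × List (St N))) a b = 0 := by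
  simp [cutL]
@[simp] lemma cutW_nil (a b : ℕ) : cutW ([] : List (List (St N) × List (St N))) a b = 0 := by
  simp [cutW]
@[simp] lemma cutL_zero (ys : List (List (St N) × List (St N))) (a : ℕ) : cutL ys a 0 = 0 := by
  simp [cutL]
@[simp] lemma cutW_zero (ys : List (List (St N) × List (St N))) (a : ℕ) : cutW ys a 0 = 0 := by
  simp [cutW]

lemma cutL_cons_zero (p : List (St N) × List (St N)) (ys) (b : ℕ) :
    cutL (p :: ys) 0 (b + 1) = p.2.length + cutL ys 0 b := by
  simp [cutL]

lemma cutW_cons_zero (p : List (St N) × List (St N)) (ys) (b : ℕ) :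
    cutW (p :: ys) 0 (b + 1) = wt p.2 + cutW ys 0 b := by
  simp [cutW]

lemma cutL_cons_succ (p : List (St N) × List (St N)) (ys) (a b : ℕ) :
    cutL (p :: ys) (a + 1) (b + 1) = cutL ys a b := by
  simp [cutL]

lemma cutW_cons_succ (p : List (St N) × List (St N)) (ys) (a b : ℕ) :
    cutW (p :: ys) (a + 1) (b + 1) = cutW ys a b := by
  simp [cutW]

lemma cutL_split (ys : List (List (St N) × List (St N))) (a b : ℕ) (hab : a ≤ b) :
    cutL ys 0 b = cutL ys 0 a + cutL ys a b := by
  unfold cutL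
  rw [show ys.take a = (ys.take b).take a from by
    rw [List.take_take, Nat.min_eq_left hab]]
  conv_lhs => rw [← List.take_append_drop a (ys.take b)]
  simp

theorem blockcut (E : Fin N → Fin N → ℤ → Prop) :
    ∀ {u : Fin N} {l ys B}, Scan E u l ys B → AChain E u l → ∀ a b, a ≤ b → b ≤ ys.length →
    ∃ l', AChain E u l' ∧ lastOf u l' = lastOf u l ∧
      (∀ v, v ∈ vl u l' → v ∈ vl u l) ∧
      l'.length + cutL ys a b = l.length ∧ wt l' + cutW ys a b = wt l := by
  intro u l ys B hscan
  induction hscan with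
  | nil u l =>
    intro hch a b hab hb
    simp at hb
    subst hb
    simp at hab
    subst hab
    exact ⟨l, hch, rfl, fun v hv => hv, by simp, by simp⟩
  | @cons u l A Y rest ys B hl hXY hsc hscanrest ih =>
    intro hch a b hab hb
    have hbase : lastOf (lastOf u A) Y = lastOf u A := hsc.2.2.1
    have hbase2 : lastOf u (A ++ Y) = lastOf u A := by
      rw [lastOf_append]; exact hbase
    rw [hl] at hch
    have hchA : AChain E u A := ((AChain_append E u A (Y ++ rest)).1 hch).1
    have hchYrest : AChain E (lastOf u A) (Y ++ rest) :=
      ((AChain_append E u A (Y ++ rest)).1 hch).2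
    have hchY : AChain E (lastOf u A) Y := ((AChain_append E _ Y rest).1 hchYrest).1
    have hchrest : AChain E (lastOf u A) rest := by
      have := ((AChain_append E _ Y rest).1 hchYrest).2
      rwa [hbase] at this
    have hlast_l : lastOf u l = lastOf (lastOf u A) rest := by
      rw [hl, lastOf_append, lastOf_append, hbase]
    have hchrest' : AChain E (lastOf u (A ++ Y)) rest := by rwa [hbase2]
    match b, hab with
    | 0, hab =>
      have ha0 : a = 0 := Nat.le_zero.mp hab
      subst ha0
      exact ⟨l, by rwa [hl], rfl, fun v hv => hv, by simp, by simp⟩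
    | b + 1, hab =>
      have hb' : b ≤ ys.length := by simpa using hb
      match a with
      | 0 =>
        obtain ⟨l₁, hch₁, hlast₁, hvl₁, hlen₁, hwt₁⟩ := ih hchrest' 0 b (Nat.zero_le _) hb'
        rw [hbase2] at hch₁ hlast₁ hvl₁
        refine ⟨A ++ l₁, ?_, ?_, ?_, ?_, ?_⟩
        · exact (AChain_append E u A l₁).2 ⟨hchA, hch₁⟩
        · rw [lastOf_append, hlast₁, hlast_l]
        · intro v hv
          rcases (mem_vl_append_iff v u A l₁).1 hv with h | h
          · rw [hl]; exact mem_vl_append_left v u A _ h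
          · have : v ∈ vl (lastOf u A) l₁ := List.mem_cons_of_mem _ h
            have hrest := hvl₁ v this
            rw [hl]
            rcases (mem_vl_iff _ _ _).1 hrest with h2 | h2
            · subst h2; exact mem_vl_append_left _ u A _ (lastOf_mem_vl u A)
            · rw [mem_vl_iff]; right
              simp only [List.map_append, List.mem_append]
              right; right; exact h2
        · rw [cutL_cons_zero, hl]
          simp only [List.length_append]
          omega
        · rw [show cutW ((A,Y)::ys) 0 (b+1) = wt Y + cutW ys 0 b from cutW_cons_zero (A,Y) ys b,
            hl]
          simp only [wt_append]
          omega
      | a + 1 =>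
        have hab' : a ≤ b := Nat.succ_le_succ_iff.mp hab
        obtain ⟨l₁, hch₁, hlast₁, hvl₁, hlen₁, hwt₁⟩ := ih hchrest' a b hab' hb'
        rw [hbase2] at hch₁ hlast₁ hvl₁
        refine ⟨A ++ Y ++ l₁, ?_, ?_, ?_, ?_, ?_⟩
        · rw [List.append_assoc]
          refine (AChain_append E u A (Y ++ l₁)).2 ⟨hchA, ?_⟩
          refine (AChain_append E _ Y l₁).2 ⟨hchY, ?_⟩
          rwa [hbase]
        · rw [lastOf_append, lastOf_append, hbase, hlast₁, hlast_l]
        · intro v hv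
          rcases (mem_vl_append_iff v u (A ++ Y) l₁).1 hv with h | h
          · rw [hl, ← List.append_assoc]; exact mem_vl_append_left v u (A ++ Y) rest h
          · have : v ∈ vl (lastOf u A) l₁ := List.mem_cons_of_mem _ h
            have hrest := hvl₁ v this
            rw [hl]
            rcases (mem_vl_iff _ _ _).1 hrest with h2 | h2
            · subst h2; exact mem_vl_append_left _ u A _ (lastOf_mem_vl u A)
            · rw [mem_vl_iff]; right
              simp only [List.map_append, List.mem_append]
              right; right; exact h2
        · rw [cutL_cons_succ, hl]
          simp only [List.length_append]
          omega
        · rw [cutW_cons_succ, hl]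
          simp only [wt_append]
          omega

end S1

namespace S1
variable {N : ℕ}

theorem scan_cut_wt (E : Fin N → Fin N → ℤ → Prop) (V : Fin N → Prop) (c : ℕ) (ws : ℤ)
    (Hmin : ∀ k Y, IsSC E k Y → (∀ v ∈ vl k Y, V v) → ws * Y.length ≤ (c : ℤ) * wt Y) :
    ∀ {u l ys B}, Scan E u l ys B → (∀ v ∈ vl u l, V v) →
      ∀ a b, ws * (cutL ys a b) ≤ (c : ℤ) * cutW ys a b := by
  intro u l ys B hscan
  induction hscan with
  | nil u l => intro _ a b; simp
  | @cons u l A Y rest ys B hl hXY hsc hscanrest ih =>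
    intro hV a b
    have hbase : lastOf (lastOf u A) Y = lastOf u A := hsc.2.2.1
    have hVY : ∀ v ∈ vl (lastOf u A) Y, V v := by
      intro v hv
      apply hV
      rw [hl, ← List.append_assoc]
      exact mem_vl_append_left v u (A ++ Y) rest (mem_vl_append_right v u A Y hv)
    have hVrest : ∀ v ∈ vl (lastOf u (A ++ Y)) rest, V v := by
      intro v hv
      apply hV
      rw [hl, ← List.append_assoc]
      exact mem_vl_append_right v u (A ++ Y) rest hv
    have hY := Hmin (lastOf u A) Y hsc hVY
    match b with
    | 0 => simp
    | b + 1 =>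
      match a with
      | 0 =>
        rw [cutL_cons_zero, show cutW ((A,Y)::ys) 0 (b+1) = wt Y + cutW ys 0 b from
          cutW_cons_zero (A,Y) ys b]
        have := ih hVrest 0 b
        push_cast
        linarith
      | a + 1 =>
        rw [cutL_cons_succ, cutW_cons_succ]
        exact ih hVrest a b

theorem scan_cyc_len (E : Fin N → Fin N → ℤ → Prop) :
    ∀ {u l ys B}, Scan E u l ys B → ∀ p ∈ ys, 1 ≤ p.2.length := by
  intro u l ys B hscan
  induction hscan with
  | nil u l => intro p hp; simp at hp
  | @cons u l A Y rest ys B hl hXY hsc hscanrest ih =>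
    intro p hp
    rcases List.mem_cons.1 hp with h | h
    · subst h
      have : Y ≠ [] := hsc.1
      simpa [Nat.one_le_iff_ne_zero, List.length_eq_zero_iff] using this
    · exact ih p h

lemma sum_ge_length {L : List ℕ} (h : ∀ x ∈ L, 1 ≤ x) : L.length ≤ L.sum := by
  induction L with
  | nil => simp
  | cons x r ih =>
    simp only [List.length_cons, List.sum_cons]
    have := h x (List.mem_cons_self)
    have := ih (fun y hy => h y (List.mem_cons_of_mem _ hy))
    omega

lemma cutL_pos (E : Fin N → Fin N → ℤ → Prop) {u l ys B} (hscan : Scan E u l ys B)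
    {i j : ℕ} (hij : i < j) (hj : j ≤ ys.length) : 1 ≤ cutL ys i j := by
  unfold cutL
  set L := ((ys.take j).drop i) with hL
  have hLlen : L.length = j - i := by
    rw [hL, List.length_drop, List.length_take]
    omega
  have h1 : ∀ x ∈ L.map (fun p => p.2.length), 1 ≤ x := by
    intro x hx
    obtain ⟨p, hp, rfl⟩ := List.mem_map.1 hx
    exact scan_cyc_len E hscan p (List.mem_of_mem_take (List.mem_of_mem_drop hp))
  have := sum_ge_length h1
  rw [List.length_map, hLlen] at this
  omega

theorem ML (E : Fin N → Fin N → ℤ → Prop) (hN : 1 ≤ N) (V : Fin N → Prop)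
    (c : ℕ) (ws : ℤ) (hc : 1 ≤ c) (hcN : c ≤ N)
    (Hmin : ∀ k Y, IsSC E k Y → (∀ v ∈ vl k Y, V v) → ws * Y.length ≤ (c : ℤ) * wt Y) :
    ∀ (F : ℕ) (u : Fin N) (l : List (St N)), l.length ≤ F → AChain E u l →
      (∀ v ∈ vl u l, V v) →
      ∃ l' M, AChain E u l' ∧ lastOf u l' = lastOf u l ∧ (∀ v ∈ vl u l', V v) ∧
        l'.length + M = l.length ∧ l'.length ≤ c * N ∧ c ∣ M ∧
        (c : ℤ) * wt l' + ws * (M : ℤ) ≤ (c : ℤ) * wt l := by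
  intro F
  induction F with
  | zero =>
    intro u l hlen hch hV
    refine ⟨l, 0, hch, rfl, hV, by simp, ?_, dvd_zero c, by simp⟩
    have : l.length = 0 := Nat.le_zero.mp hlen
    omega
  | succ F ih =>
    intro u l hlen hch hV
    by_cases hsmall : l.length < c * N
    · exact ⟨l, 0, hch, rfl, hV, by simp, le_of_lt hsmall, dvd_zero c, by simp⟩
    · push_neg at hsmall
      obtain ⟨ys, B, hscan, hys⟩ := scan_exists E hN c u l hch hsmall
      have : NeZero c := ⟨by omega⟩
      -- pigeonhole on residues of prefix cut sums
      have hph : ∃ i ∈ Finset.range (c + 1), ∃ j ∈ Finset.range (c + 1),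
          i ≠ j ∧ ((cutL ys 0 i : ZMod c) = (cutL ys 0 j : ZMod c)) := by
        apply Finset.exists_ne_map_eq_of_card_lt_of_maps_to
        · rw [Finset.card_range, Finset.card_univ, ZMod.card c]
          omega
        · intro a _; exact Finset.mem_univ _
      obtain ⟨i₀, hi₀, j₀, hj₀, hne, heq⟩ := hph
      -- wlog i < j
      have key : ∀ i j : ℕ, i < j → j ≤ c →
          ((cutL ys 0 i : ZMod c) = (cutL ys 0 j : ZMod c)) →
          ∃ l' M, AChain E u l' ∧ lastOf u l' = lastOf u l ∧ (∀ v ∈ vl u l', V v) ∧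
            l'.length + M = l.length ∧ l'.length ≤ c * N ∧ c ∣ M ∧
            (c : ℤ) * wt l' + ws * (M : ℤ) ≤ (c : ℤ) * wt l := by
        intro i j hij hjc heqij
        have hjys : j ≤ ys.length := by omega
        have hsplit := cutL_split ys i j (le_of_lt hij)
        have hmod : cutL ys 0 i ≡ cutL ys 0 j [MOD c] :=
          (ZMod.natCast_eq_natCast_iff _ _ _).mp heqij
        have hdvd : c ∣ cutL ys i j := by
          have h2 := (Nat.modEq_iff_dvd' (by omega)).mp hmod
          have h3 : cutL ys 0 j - cutL ys 0 i = cutL ys i j := by omega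
          rwa [h3] at h2
        have hpos : 1 ≤ cutL ys i j := cutL_pos E hscan hij hjys
        obtain ⟨l₁, hch₁, hlast₁, hvl₁, hlen₁, hwt₁⟩ :=
          blockcut E hscan hch i j (le_of_lt hij) hjys
        have hratio := scan_cut_wt E V c ws Hmin hscan hV i j
        obtain ⟨l', M₁, hch', hlast', hV', hlen', hsmall', hdvd', hwt'⟩ :=
          ih u l₁ (by omega) hch₁ (fun v hv => hV v (hvl₁ v hv))
        refine ⟨l', cutL ys i j + M₁, hch', by rw [hlast', hlast₁], hV', by omega,
          hsmall', dvd_add hdvd hdvd', ?_⟩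
        push_cast
        have hmul : (c : ℤ) * wt l₁ + (c : ℤ) * cutW ys i j = (c : ℤ) * wt l := by
          rw [← mul_add, hwt₁]
        linarith
      rcases Nat.lt_or_ge i₀ j₀ with h | h
      · exact key i₀ j₀ h (by simpa using Nat.lt_succ_iff.mp (Finset.mem_range.mp hj₀)) heq
      · have : j₀ < i₀ := by omega
        exact key j₀ i₀ this (by simpa using Nat.lt_succ_iff.mp (Finset.mem_range.mp hi₀)) heq.symm

end S1

namespace S1
variable {N : ℕ}

lemma chain_wt_lb (E : Fin N → Fin N → ℤ → Prop) {B : ℤ}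
    (hB : ∀ i j w, E i j w → |w| ≤ B) :
    ∀ (l : List (St N)) (u : Fin N), AChain E u l → -(B * l.length) ≤ wt l := by
  intro l
  induction l with
  | nil => intro u _; simp
  | cons s r ih =>
    intro u hch
    have h1 : -B ≤ s.1 := (abs_le.mp (hB u s.2 s.1 hch.1)).1
    have h2 := ih s.2 hch.2
    have h3 : (B * (((r.length : ℤ)) + 1)) = B * r.length + B := by ring
    simp only [wt_cons, List.length_cons]
    push_cast
    rw [h3]
    linarith

theorem exists_minratio (E : Fin N → Fin N → ℤ → Prop) (hN : 1 ≤ N) {B : ℤ}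
    (hB : ∀ i j w, E i j w → |w| ≤ B) (V : Fin N → Prop)
    (k₀ : Fin N) (C₀ : List (St N)) (h₀ : IsSC E k₀ C₀) (h₀V : ∀ v ∈ vl k₀ C₀, V v) :
    ∃ k C, IsSC E k C ∧ (∀ v ∈ vl k C, V v) ∧
      ∀ k' Y, IsSC E k' Y → (∀ v ∈ vl k' Y, V v) → wt C * Y.length ≤ wt Y * C.length := by
  have : NeZero N := ⟨by omega⟩
  set fact : ℕ := N.factorial with hfact
  have hfactpos : (0 : ℤ) < (fact : ℤ) := by
    exact_mod_cast N.factorial_pos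
  set P : ℤ → Prop := fun z => ∃ kC : Fin N × List (St N), (IsSC E kC.1 kC.2 ∧
    ∀ v ∈ vl kC.1 kC.2, V v) ∧ z = wt kC.2 * ((fact / kC.2.length : ℕ) : ℤ) with hP
  have hq : ∀ (C : List (St N)), C ≠ [] → C.length ≤ N →
      (C.length * (fact / C.length) = fact) := by
    intro C hne hlen
    exact Nat.mul_div_cancel' (Nat.dvd_factorial (List.length_pos_iff.mpr hne) hlen)
  have hbdd : ∀ z, P z → -(B * fact) ≤ z := by
    rintro z ⟨⟨k, C⟩, ⟨hsc, hscV⟩, rfl⟩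
    have hlen : C.length ≤ N := hsc.length_le_N
    have hzne : C ≠ [] := hsc.1
    have hlb : -(B * C.length) ≤ wt C := chain_wt_lb E hB C k hsc.2.1
    have hqq := hq C hzne hlen
    have hcast : ((C.length : ℤ)) * ((fact / C.length : ℕ) : ℤ) = (fact : ℤ) := by
      exact_mod_cast congrArg (Nat.cast : ℕ → ℤ) hqq
    have hqnn : (0 : ℤ) ≤ ((fact / C.length : ℕ) : ℤ) := Int.natCast_nonneg _
    have := mul_le_mul_of_nonneg_right hlb hqnn
    calc -(B * (fact : ℤ)) = -(B * C.length) * ((fact / C.length : ℕ) : ℤ) := by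
          rw [← hcast]; ring
      _ ≤ wt C * ((fact / C.length : ℕ) : ℤ) := this
  obtain ⟨lb, hlbP, hlbmin⟩ := Int.exists_least_of_bdd ⟨-(B * fact), hbdd⟩
    ⟨wt C₀ * ((fact / C₀.length : ℕ) : ℤ), ⟨(k₀, C₀), ⟨h₀, h₀V⟩, rfl⟩⟩
  obtain ⟨⟨k, C⟩, ⟨hsc, hscV⟩, hlbeq⟩ := hlbP
  refine ⟨k, C, hsc, hscV, ?_⟩
  intro k' Y hY hYV
  have hle : wt C * ((fact / C.length : ℕ) : ℤ) ≤ wt Y * ((fact / Y.length : ℕ) : ℤ) := by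
    rw [← hlbeq]
    exact hlbmin _ ⟨(k', Y), ⟨hY, hYV⟩, rfl⟩
  have hCc : ((C.length : ℤ)) * ((fact / C.length : ℕ) : ℤ) = (fact : ℤ) := by
    exact_mod_cast congrArg (Nat.cast : ℕ → ℤ) (hq C hsc.1 hsc.length_le_N)
  have hYc : ((Y.length : ℤ)) * ((fact / Y.length : ℕ) : ℤ) = (fact : ℤ) := by
    exact_mod_cast congrArg (Nat.cast : ℕ → ℤ) (hq Y hY.1 hY.length_le_N)
  have hnn : (0 : ℤ) ≤ (C.length : ℤ) * (Y.length : ℤ) :=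
    mul_nonneg (Int.natCast_nonneg _) (Int.natCast_nonneg _)
  have key := mul_le_mul_of_nonneg_right hle hnn
  have e1 : (wt C * ((fact / C.length : ℕ) : ℤ)) * ((C.length : ℤ) * (Y.length : ℤ))
      = (wt C * Y.length) * (fact : ℤ) := by rw [← hCc]; ring
  have e2 : (wt Y * ((fact / Y.length : ℕ) : ℤ)) * ((C.length : ℤ) * (Y.length : ℤ))
      = (wt Y * C.length) * (fact : ℤ) := by rw [← hYc]; ring
  rw [e1, e2] at key
  exact le_of_mul_le_mul_right key hfactpos

theorem core (E : Fin N → Fin N → ℤ → Prop) (hN : 1 ≤ N) {B : ℤ}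
    (hB : ∀ i j w, E i j w → |w| ≤ B)
    (u : Fin N) (l : List (St N)) (hch : AChain E u l) (hbig : N ^ 4 < l.length) :
    ∃ (P C S : List (St N)) (k : Fin N) (m : ℕ),
      lastOf u P = k ∧ IsSC E k C ∧
      AChain E u P ∧ AChain E k S ∧ lastOf k S = lastOf u l ∧
      P.length + S.length ≤ N ^ 4 ∧
      P.length + m * C.length + S.length = l.length ∧
      wt P + (m : ℤ) * wt C + wt S ≤ wt l := by
  have : NeZero N := ⟨by omega⟩
  have hN4 : N ≤ N ^ 4 := Nat.le_self_pow (by norm_num) N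
  have hNl : N ≤ l.length := by omega
  -- find one simple cycle on the walk
  obtain ⟨X₀, Y₀, Z₀, hl₀, hXY₀, hsc₀⟩ := firstcyc E hN u l hch hNl
  have hsc₀V : ∀ v ∈ vl (lastOf u X₀) Y₀, v ∈ vl u l := by
    intro v hv
    rw [hl₀]
    exact mem_vl_append_left v u (X₀ ++ Y₀) Z₀ (mem_vl_append_right v u X₀ Y₀ hv)
  -- min-ratio cycle
  obtain ⟨k, C, hC, hCV, hminr⟩ := exists_minratio E hN hB (fun v => v ∈ vl u l)
    (lastOf u X₀) Y₀ hsc₀ hsc₀V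
  set c := C.length with hc
  have hc1 : 1 ≤ c := List.length_pos_iff.mpr hC.1
  have hcN : c ≤ N := hC.length_le_N
  set ws := wt C with hws
  have Hmin : ∀ k' Y, IsSC E k' Y → (∀ v ∈ vl k' Y, v ∈ vl u l) →
      ws * Y.length ≤ (c : ℤ) * wt Y := by
    intro k' Y hY hYV
    have := hminr k' Y hY hYV
    rw [mul_comm ((c : ℕ) : ℤ) (wt Y)]
    exact this
  have hkmem : k ∈ vl u l := hCV k (List.mem_cons_self)
  -- split l at an occurrence of k
  have hsplit : ∃ P₀ S₀, l = P₀ ++ S₀ ∧ lastOf u P₀ = k ∧ (P₀ = [] ∨ 2 ≤ N) := by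
    by_cases hku : k = u
    · exact ⟨[], l, by simp, by simp [hku], Or.inl rfl⟩
    · have hN2 : 2 ≤ N := by
        rcases Nat.lt_or_ge N 2 with h | h
        · exfalso
          have hN1 : N = 1 := by omega
          subst hN1
          exact hku (Subsingleton.elim k u)
        · exact h
      rcases (mem_vl_iff _ _ _).1 hkmem with h | h
      · exact absurd h hku
      · obtain ⟨s, hs, hsnd⟩ := List.mem_map.1 h
        obtain ⟨l₁, l₂, rfl⟩ := List.mem_iff_append.mp hs
        refine ⟨l₁ ++ [s], l₂, by simp, ?_, Or.inr hN2⟩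
        rw [lastOf_append]
        simpa using hsnd
  obtain ⟨P₀, S₀, hlps, hlastP₀, hcase⟩ := hsplit
  rw [hlps] at hch
  have hchP₀ : AChain E u P₀ := ((AChain_append E u P₀ S₀).1 hch).1
  have hchS₀ : AChain E k S₀ := by
    have := ((AChain_append E u P₀ S₀).1 hch).2
    rwa [hlastP₀] at this
  have hVP₀ : ∀ v ∈ vl u P₀, v ∈ vl u l := by
    intro v hv; rw [hlps]; exact mem_vl_append_left v u P₀ S₀ hv
  have hVS₀ : ∀ v ∈ vl k S₀, v ∈ vl u l := by
    intro v hv; rw [hlps]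
    refine mem_vl_append_right v u P₀ S₀ ?_
    rwa [hlastP₀]
  obtain ⟨P', MP, hchP', hlastP', hVP', hlenP', hsmallP', hdvdP', hwtP'⟩ :=
    ML E hN (fun v => v ∈ vl u l) c ws hc1 hcN Hmin P₀.length u P₀ le_rfl hchP₀ hVP₀
  obtain ⟨S', MS, hchS', hlastS', hVS', hlenS', hsmallS', hdvdS', hwtS'⟩ :=
    ML E hN (fun v => v ∈ vl u l) c ws hc1 hcN Hmin S₀.length k S₀ le_rfl hchS₀ hVS₀
  set m := (MP + MS) / c with hm
  have hmc : m * c = MP + MS := Nat.div_mul_cancel (dvd_add hdvdP' hdvdS')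
  have hlenl : P₀.length + S₀.length = l.length := by rw [hlps]; simp
  refine ⟨P', C, S', k, m, by rw [hlastP', hlastP₀], hC, hchP', hchS', ?_, ?_, ?_, ?_⟩
  · rw [hlastS', hlps, lastOf_append, hlastP₀]
  · -- length bound
    rcases hcase with h | h
    · have : P₀.length = 0 := by rw [h]; simp
      have hP'0 : P'.length = 0 := by omega
      have : c * N ≤ N ^ 4 := by
        calc c * N ≤ N * N := Nat.mul_le_mul_right N hcN
        _ = N ^ 2 := by ring
        _ ≤ N ^ 4 := Nat.pow_le_pow_right (by omega) (by norm_num)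
      omega
    · have h2 : c * N ≤ N ^ 2 := by
        calc c * N ≤ N * N := Nat.mul_le_mul_right N hcN
        _ = N ^ 2 := by ring
      have h4 : 2 * N ^ 2 ≤ N ^ 4 := by nlinarith
      omega
  · -- total length
    have hmc' : m * C.length = MP + MS := hmc
    omega
  · -- weight
    have hwtl : wt P₀ + wt S₀ = wt l := by rw [hlps, wt_append]
    have hkey : (c : ℤ) * (wt P' + (m : ℤ) * ws + wt S') ≤ (c : ℤ) * wt l := by
      have hcm : (c : ℤ) * ((m : ℤ) * ws) = ws * ((MP : ℤ) + (MS : ℤ)) := by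
        have : ((m * c : ℕ) : ℤ) = ((MP + MS : ℕ) : ℤ) := by exact_mod_cast hmc
        push_cast at this
        calc (c:ℤ) * ((m:ℤ) * ws) = ((m:ℤ) * (c:ℤ)) * ws := by ring
        _ = ((MP:ℤ) + (MS:ℤ)) * ws := by rw [this]
        _ = ws * ((MP : ℤ) + (MS : ℤ)) := by ring
      have expand : (c : ℤ) * (wt P' + (m : ℤ) * ws + wt S')
          = ((c:ℤ) * wt P' + ws * (MP:ℤ)) + ((c:ℤ) * wt S' + ws * (MS:ℤ)) := by
        rw [mul_add, mul_add, hcm]; ring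
      rw [expand]
      have : (c:ℤ) * wt P₀ + (c:ℤ) * wt S₀ = (c:ℤ) * wt l := by
        rw [← mul_add, hwtl]
      linarith
    have hcpos : (0 : ℤ) < (c : ℤ) := by exact_mod_cast hc1
    have := le_of_mul_le_mul_left hkey hcpos
    linarith
end S1

namespace S1
variable {N : ℕ}

def posify (d : ℤ) : ℤ → List (St N) → List (ℤ × Vtx N)
  | _, [] => []
  | p, s :: r => (s.1, (p + d, s.2)) :: posify d (p + d) r

def toU (d p : ℤ) (u : Fin N) (l : List (St N)) : UPath N := ⟨(p, u), posify d p l⟩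

@[simp] lemma posify_nil (d p : ℤ) : posify d p ([] : List (St N)) = [] := rfl
@[simp] lemma posify_cons (d p : ℤ) (s : St N) (r : List (St N)) :
    posify d p (s :: r) = (s.1, (p + d, s.2)) :: posify d (p + d) r := rfl

lemma posify_length (d : ℤ) : ∀ (l : List (St N)) (p : ℤ), (posify d p l).length = l.length := by
  intro l
  induction l with
  | nil => intro p; rfl
  | cons s r ih => intro p; simp [ih]

lemma posify_map_fst (d : ℤ) : ∀ (l : List (St N)) (p : ℤ),
    (posify d p l).map Prod.fst = l.map Prod.fst := by
  intro l
  induction l with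
  | nil => intro p; rfl
  | cons s r ih => intro p; simp [ih]

lemma posify_map_snd_snd (d : ℤ) : ∀ (l : List (St N)) (p : ℤ),
    ((posify d p l).map Prod.snd).map Prod.snd = l.map Prod.snd := by
  intro l
  induction l with
  | nil => intro p; rfl
  | cons s r ih => intro p; simp [ih]

lemma posify_append (d : ℤ) : ∀ (a b : List (St N)) (p : ℤ),
    posify d p (a ++ b) = posify d p a ++ posify d (p + d * a.length) b := by
  intro a
  induction a with
  | nil => intro b p; simp
  | cons s a' ih =>
    intro b p
    simp only [List.cons_append, posify_cons, ih, List.length_cons]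
    have harith : p + d + d * (a'.length : ℤ) = p + d * ((a'.length : ℕ) + 1 : ℕ) := by
      push_cast; ring
    rw [harith]

@[simp] lemma toU_first (d p : ℤ) (u : Fin N) (l : List (St N)) :
    (toU d p u l).first = (p, u) := rfl

@[simp] lemma toU_steps (d p : ℤ) (u : Fin N) (l : List (St N)) :
    (toU d p u l).steps = posify d p l := rfl

lemma toU_last (d : ℤ) : ∀ (l : List (St N)) (p : ℤ) (u : Fin N),
    (toU d p u l).last = (p + d * l.length, lastOf u l) := by
  intro l
  induction l with
  | nil =>
    intro p u
    show ((([] : List (ℤ × Vtx N)).map Prod.snd).getLastD (p, u)) = _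
    simp
  | cons s r ih =>
    intro p u
    show (((posify d p (s :: r)).map Prod.snd).getLastD (p, u)) = _
    rw [posify_cons, List.map_cons, List.getLastD_cons]
    have : ((posify d (p + d) r).map Prod.snd).getLastD (p + d, s.2)
        = (toU d (p + d) s.2 r).last := rfl
    rw [this, ih]
    have : p + d + d * (r.length : ℤ) = p + d * ((r.length : ℕ) + 1 : ℕ) := by push_cast; ring
    rw [this]
    rfl

lemma toU_weight (d p : ℤ) (u : Fin N) (l : List (St N)) :
    (toU d p u l).weight = wt l := by
  show ((posify d p l).map Prod.fst).sum = wt l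
  rw [posify_map_fst]
  rfl

lemma posify_shift (d k : ℤ) : ∀ (l : List (St N)) (p : ℤ),
    (posify d p l).map (fun s => (s.1, (s.2.1 + k, s.2.2))) = posify d (p + k) l := by
  intro l
  induction l with
  | nil => intro p; rfl
  | cons s r ih =>
    intro p
    simp only [posify_cons, List.map_cons, ih]
    have h1 : p + d + k = p + k + d := by ring
    rw [h1]

lemma shift_toU (d k p : ℤ) (u : Fin N) (l : List (St N)) :
    UPath.shift k (toU d p u l) = toU d (p + k) u l := by
  unfold UPath.shift toU
  simp only
  rw [posify_shift]

lemma glue_toU (d p q : ℤ) (u v : Fin N) (a b : List (St N)) :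
    (toU d p u a).glue (toU d q v b) = toU d p u (a ++ b) := by
  unfold UPath.glue
  rw [toU_last]
  have h1 : (p + d * a.length, lastOf u a).1 - (toU d q v b).first.1 = p + d * a.length - q := rfl
  rw [h1, shift_toU]
  have h2 : q + (p + d * a.length - q) = p + d * a.length := by ring
  rw [h2]
  unfold UPath.append toU
  simp only
  rw [posify_append]

def powL (C : List (St N)) : ℕ → List (St N)
  | 0 => []
  | m + 1 => powL C m ++ C

lemma pow_toU (d p : ℤ) (u : Fin N) (C : List (St N)) :
    ∀ m : ℕ, (toU d p u C).pow m = toU d p u (powL C m) := by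
  intro m
  induction m with
  | zero => rfl
  | succ m ih =>
    show ((toU d p u C).pow m).glue (toU d p u C) = _
    rw [ih, glue_toU]
    rfl

lemma powL_length (C : List (St N)) : ∀ m, (powL C m).length = m * C.length := by
  intro m
  induction m with
  | zero => simp [powL]
  | succ m ih =>
    show (powL C m ++ C).length = _
    rw [List.length_append, ih]
    ring

lemma powL_wt (C : List (St N)) : ∀ m, wt (powL C m) = (m : ℤ) * wt C := by
  intro m
  induction m with
  | zero => simp [powL]
  | succ m ih =>
    show wt (powL C m ++ C) = _
    rw [wt_append, ih]
    push_cast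
    ring

lemma powL_chain (E : Fin N → Fin N → ℤ → Prop) (k : Fin N) (C : List (St N))
    (h : AChain E k C) (hcl : lastOf k C = k) :
    ∀ m, AChain E k (powL C m) ∧ lastOf k (powL C m) = k := by
  intro m
  induction m with
  | zero => exact ⟨trivial, rfl⟩
  | succ m ih =>
    constructor
    · show AChain E k (powL C m ++ C)
      exact (AChain_append E k _ _).2 ⟨ih.1, by rw [ih.2]; exact h⟩
    · show lastOf k (powL C m ++ C) = k
      rw [lastOf_append, ih.2, hcl]

lemma toU_varList (d p : ℤ) (u : Fin N) (l : List (St N)) :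
    (toU d p u l).varList = vl u l := by
  show ((((p, u) : Vtx N) :: (posify d p l).map Prod.snd).map Prod.snd) = vl u l
  rw [List.map_cons, posify_map_snd_snd]
  rfl

lemma vl_get : ∀ (l : List (St N)) (u : Fin N) (i : ℕ) (hi : i < (vl u l).length),
    (vl u l).get ⟨i, hi⟩ = lastOf u (l.take i) := by
  intro l
  induction l with
  | nil =>
    intro u i hi
    simp [vl] at hi
    subst hi
    rfl
  | cons s r ih =>
    intro u i hi
    match i with
    | 0 => rfl
    | i + 1 =>
      have hvl : vl u (s :: r) = u :: vl s.2 r := by simp [vl]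
      have hi' : i < (vl s.2 r).length := by
        rw [hvl] at hi
        simpa using hi
      have h1 : (vl u (s :: r)).get ⟨i + 1, hi⟩ = (vl s.2 r).get ⟨i, hi'⟩ := by
        rw [List.get_of_eq hvl]
        rfl
      rw [h1, ih s.2 i hi']
      rfl

lemma essential_of (ρ : UPath N) (k : Fin N) (C : List (St N))
    (hvar : ρ.varList = vl k C) (hnd : (vl k C).dropLast.Nodup)
    (hlast : lastOf k C = k) (hCne : C ≠ []) : ρ.IsEssential := by
  intro a b ha hb hab heq
  have hvlen : (vl k C).length = C.length + 1 := by simp [vl]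
  have hL : ρ.varList.length = C.length + 1 := by rw [hvar, hvlen]
  have ha' : a < (vl k C).length := by rw [← hvar]; exact ha
  have hb' : b < (vl k C).length := by rw [← hvar]; exact hb
  have heq' : (vl k C).get ⟨a, ha'⟩ = (vl k C).get ⟨b, hb'⟩ := by
    rw [← List.get_of_eq hvar ⟨a, ha⟩, ← List.get_of_eq hvar ⟨b, hb⟩]
    exact heq
  have hCpos : 0 < C.length := List.length_pos_iff.mpr hCne
  have hdllen : (vl k C).dropLast.length = C.length := by
    rw [List.length_dropLast, hvlen]
    omega
  have hdrop : ∀ (i : ℕ) (h1 : i < C.length), (vl k C).get ⟨i, by omega⟩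
      = (vl k C).dropLast.get ⟨i, by rw [hdllen]; exact h1⟩ := by
    intro i h1
    simp only [List.get_eq_getElem]
    exact (List.getElem_dropLast (by rw [hdllen]; exact h1)).symm
  have hinj : ∀ (i j : ℕ) (h1 : i < C.length) (h2 : j < C.length),
      (vl k C).get ⟨i, by omega⟩ = (vl k C).get ⟨j, by omega⟩ → i = j := by
    intro i j h1 h2 hij
    rw [hdrop i h1, hdrop j h2] at hij
    have := (List.nodup_iff_injective_get.mp hnd) hij
    exact congrArg Fin.val this
  have hget0 : (vl k C).get ⟨0, by omega⟩ = k := rfl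
  have hgetlast : (vl k C).get ⟨C.length, by omega⟩ = k := by
    rw [vl_get C k C.length (by omega), List.take_length, hlast]
  rcases Nat.lt_or_ge b (C.length) with hblt | hbge
  · exfalso
    have halt : a < C.length := by omega
    exact absurd (hinj a b halt hblt heq') (by omega)
  · have hbeq : b = C.length := by omega
    subst hbeq
    have hak : (vl k C).get ⟨a, ha'⟩ = k := by rw [heq', hgetlast]
    have ha0 : a = 0 := by
      by_contra hne0
      have := hinj a 0 (by omega) (by omega) (by rw [hak, hget0])
      omega
    exact ⟨ha0, by omega⟩

def Efw (R : DBC N) : Fin N → Fin N → ℤ → Prop :=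
  fun i j w => ((Sum.inl i, Sum.inr j, w) : Atom N) ∈ R.atoms

def Ebw (R : DBC N) : Fin N → Fin N → ℤ → Prop :=
  fun i j w => ((Sum.inr i, Sum.inl j, w) : Atom N) ∈ R.atoms

lemma inUnfN_fw (R : DBC N) (n : ℕ) : ∀ (l : List (St N)) (u : Fin N) (p : ℤ),
    AChain (Efw R) u l → 0 ≤ p → p + l.length ≤ (n : ℤ) → (toU 1 p u l).InUnfN R n := by
  intro l
  induction l with
  | nil => intro u p _ _ _; trivial
  | cons s r ih =>
    intro u p hch h0 hn
    have hlt : p < (n : ℤ) := by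
      have : ((s :: r).length : ℤ) = (r.length : ℤ) + 1 := by push_cast [List.length_cons]; ring
      rw [this] at hn
      have : (0:ℤ) ≤ (r.length : ℤ) := Int.natCast_nonneg _
      omega
    constructor
    · exact ⟨p, h0, hlt, Sum.inl u, Sum.inr s.2, hch.1, rfl, rfl⟩
    · have hn' : (p + 1) + (r.length : ℤ) ≤ (n : ℤ) := by
        have : ((s :: r).length : ℤ) = (r.length : ℤ) + 1 := by push_cast [List.length_cons]; ring
        rw [this] at hn
        omega
      exact ih s.2 (p + 1) hch.2 (by omega) hn'

lemma inUnfN_bw (R : DBC N) (n : ℕ) : ∀ (l : List (St N)) (u : Fin N) (p : ℤ),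
    AChain (Ebw R) u l → (l.length : ℤ) ≤ p → p ≤ (n : ℤ) → (toU (-1) p u l).InUnfN R n := by
  intro l
  induction l with
  | nil => intro u p _ _ _; trivial
  | cons s r ih =>
    intro u p hch h0 hn
    have hlen : ((s :: r).length : ℤ) = (r.length : ℤ) + 1 := by push_cast [List.length_cons]; ring
    rw [hlen] at h0
    have hrnn : (0:ℤ) ≤ (r.length : ℤ) := Int.natCast_nonneg _
    constructor
    · refine ⟨p - 1, by omega, by omega, Sum.inr u, Sum.inl s.2, hch.1, ?_, ?_⟩
      · show (p, u) = ((p - 1) + 1, u)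
        rw [show (p - 1) + 1 = p from by ring]
      · show (p + (-1), s.2) = (p - 1, s.2)
        rw [show p + (-1) = p - 1 from by ring]
    · exact ih s.2 (p + (-1)) hch.2 (by omega) (by omega)

def deU (l : List (ℤ × Vtx N)) : List (St N) := l.map fun s => (s.1, s.2.2)

@[simp] lemma deU_nil : deU ([] : List (ℤ × Vtx N)) = [] := rfl
@[simp] lemma deU_cons (s : ℤ × Vtx N) (r : List (ℤ × Vtx N)) :
    deU (s :: r) = (s.1, s.2.2) :: deU r := rfl

lemma deU_length (l : List (ℤ × Vtx N)) : (deU l).length = l.length := by simp [deU]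

lemma deU_wt (l : List (ℤ × Vtx N)) : wt (deU l) = (l.map Prod.fst).sum := by
  induction l with
  | nil => rfl
  | cons s r ih => rw [deU_cons, wt_cons, ih, List.map_cons, List.sum_cons]

lemma conv_fw (R : DBC N) (hFw : R.IsFw) (n : ℕ) :
    ∀ (l : List (ℤ × Vtx N)) (u : Vtx N), UPath.EdgeChain (R.EdgeN n) u l →
      l = posify 1 u.1 (deU l) ∧ AChain (Efw R) u.2 (deU l) := by
  intro l
  induction l with
  | nil => intro u _; exact ⟨rfl, trivial⟩
  | cons s r ih =>
    intro u hch
    obtain ⟨hedge, hrest⟩ := hch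
    obtain ⟨p, hp0, hpn, s', t', hmem, hu, hv⟩ := hedge
    obtain ⟨i, j, w, habc⟩ := hFw _ hmem
    have hs' : s' = Sum.inl i := congrArg Prod.fst habc
    have ht' : t' = Sum.inr j := congrArg (fun x => x.2.1) habc
    have hw : s.1 = w := congrArg (fun x => x.2.2) habc
    subst hs'
    subst ht'
    have hueq : u = (p, i) := hu
    have hveq : s.2 = (p + 1, j) := hv
    have hu1 : u.1 = p := by rw [hueq]
    have hu2 : u.2 = i := by rw [hueq]
    have hs21 : s.2.1 = p + 1 := by rw [hveq]
    have hs22 : s.2.2 = j := by rw [hveq]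
    obtain ⟨ihpos, ihch⟩ := ih s.2 hrest
    constructor
    · show s :: r = (s.1, (u.1 + 1, s.2.2)) :: posify 1 (u.1 + 1) (deU r)
      congr 1
      · rw [hu1, hs22]
        rw [show ((s.1, (p + 1, j)) : ℤ × Vtx N) = (s.1, s.2) from by rw [hveq]]
      · rw [hu1, ← hs21]
        exact ihpos
    · constructor
      · show Efw R u.2 s.2.2 s.1
        rw [hu2, hs22]
        exact hmem
      · exact ihch

lemma conv_bw (R : DBC N) (hBw : R.IsBw) (n : ℕ) :
    ∀ (l : List (ℤ × Vtx N)) (u : Vtx N), UPath.EdgeChain (R.EdgeN n) u l →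
      l = posify (-1) u.1 (deU l) ∧ AChain (Ebw R) u.2 (deU l) := by
  intro l
  induction l with
  | nil => intro u _; exact ⟨rfl, trivial⟩
  | cons s r ih =>
    intro u hch
    obtain ⟨hedge, hrest⟩ := hch
    obtain ⟨p, hp0, hpn, s', t', hmem, hu, hv⟩ := hedge
    obtain ⟨i, j, w, habc⟩ := hBw _ hmem
    have hs' : s' = Sum.inr i := congrArg Prod.fst habc
    have ht' : t' = Sum.inl j := congrArg (fun x => x.2.1) habc
    have hw : s.1 = w := congrArg (fun x => x.2.2) habc
    subst hs'
    subst ht'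
    have hueq : u = (p + 1, i) := hu
    have hveq : s.2 = (p, j) := hv
    have hu1 : u.1 = p + 1 := by rw [hueq]
    have hu2 : u.2 = i := by rw [hueq]
    have hs21 : s.2.1 = p := by rw [hveq]
    have hs22 : s.2.2 = j := by rw [hveq]
    obtain ⟨ihpos, ihch⟩ := ih s.2 hrest
    constructor
    · show s :: r = (s.1, (u.1 + (-1), s.2.2)) :: posify (-1) (u.1 + (-1)) (deU r)
      congr 1
      · rw [hs22]
        rw [show u.1 + (-1) = p from by rw [hu1]; ring]
        rw [show ((s.1, (p, j)) : ℤ × Vtx N) = (s.1, s.2) from by rw [hveq]]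
      · rw [show u.1 + (-1) = p from by rw [hu1]; ring, ← hs21]
        exact ihpos
    · constructor
      · show Ebw R u.2 s.2.2 s.1
        rw [hu2, hs22]
        exact hmem
      · exact ihch

end S1

open S1

/-- For a one-directional DB constraint `R`, every extremal
path in `G_R^n` has a compatible path that is an instance of a biquadratic
path scheme. -/
theorem statement1 (N : ℕ) (hN : 1 ≤ N) (R : DBC N) (hR : R.IsOneDirectional)
    (n : ℕ) (hn : 1 ≤ n) (ρ : UPath N) (hρ : ρ.InUnfN R n)
    (hne : ρ.steps ≠ []) (hext : ρ.IsExtremalIn n) :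
    ∃ (σ lam σ' : UPath N) (m : ℕ),
      IsSchemeTriple σ lam σ' ∧
      σ.steps.length + σ'.steps.length ≤ N ^ 4 ∧
      (schemeElem σ lam σ' m).InUnfN R n ∧
      (schemeElem σ lam σ' m).Compatible ρ := by
  classical
  by_cases hsmall : ρ.steps.length ≤ N ^ 4
  · -- trivial scheme with empty lam
    refine ⟨ρ, ⟨ρ.last, []⟩, ⟨ρ.last, []⟩, 0, ?_, ?_, ?_, ?_⟩
    · refine ⟨Or.inl rfl, rfl, rfl, ?_⟩
      show ρ.steps ++ _ ≠ []
      simp [hne]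
    · simpa using hsmall
    · have hElem : schemeElem ρ ⟨ρ.last, []⟩ ⟨ρ.last, []⟩ 0 = ρ := by
        show UPath.mk ρ.first (ρ.steps ++ []) = ρ
        rw [List.append_nil]
      rw [hElem]; exact hρ
    · have hElem : schemeElem ρ ⟨ρ.last, []⟩ ⟨ρ.last, []⟩ 0 = ρ := by
        show UPath.mk ρ.first (ρ.steps ++ []) = ρ
        rw [List.append_nil]
      rw [hElem]
      exact ⟨rfl, rfl, le_refl _⟩
  · push_neg at hsmall
    set Bn : ℕ := R.atoms.sup (fun a => a.2.2.natAbs) with hBn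
    rcases hR with hFw | hBw
    · -- FORWARD case
      obtain ⟨hpos, hch⟩ := conv_fw R hFw n ρ.steps ρ.first hρ
      set l : List (St N) := deU ρ.steps with hl
      set u : Fin N := ρ.first.2 with hu
      have hrho : ρ = toU 1 ρ.first.1 u l := by
        show ρ = ⟨(ρ.first.1, ρ.first.2), posify 1 ρ.first.1 l⟩
        rw [← hpos]
      have hlast' : ρ.last = (ρ.first.1 + 1 * (l.length : ℤ), lastOf u l) := by
        conv_lhs => rw [hrho]
        exact toU_last 1 l ρ.first.1 u
      have hlast1 : ρ.last.1 = ρ.first.1 + (l.length : ℤ) := by rw [hlast']; ring_nf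
      have hllen : l.length = ρ.steps.length := deU_length ρ.steps
      have hlpos : 1 ≤ l.length := by
        rw [hllen]
        have := List.length_pos_iff.mpr hne
        omega
      have hfirst0 : ρ.first.1 = 0 ∧ (l.length : ℤ) = (n : ℤ) := by
        obtain ⟨h1, h2⟩ := hext
        have hl1 : (1 : ℤ) ≤ (l.length : ℤ) := by exact_mod_cast hlpos
        have hn1 : (1 : ℤ) ≤ (n : ℤ) := by exact_mod_cast hn
        rcases h1 with h1 | h1 <;> rcases h2 with h2 | h2 <;> omega
      have hlenn : l.length = n := by exact_mod_cast hfirst0.2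
      have hB : ∀ i j w, Efw R i j w → |w| ≤ (Bn : ℤ) := by
        intro i j w hw
        have h1 : w.natAbs ≤ Bn := Finset.le_sup (f := fun a : Atom N => a.2.2.natAbs) hw
        calc |w| = (w.natAbs : ℤ) := Int.abs_eq_natAbs w
        _ ≤ (Bn : ℤ) := by exact_mod_cast h1
      obtain ⟨P, C, S, k, m, hlastP, hC, hchP, hchS, hlastS, hPS, hlen4, hwt4⟩ :=
        core (Efw R) hN hB u l hch (by omega)
      have hpow := powL_chain (Efw R) k C hC.2.1 hC.2.2.1 m
      set F : List (St N) := P ++ (powL C m ++ S) with hF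
      have hchainF : AChain (Efw R) u F := by
        refine (AChain_append _ u P _).2 ⟨hchP, ?_⟩
        rw [hlastP]
        refine (AChain_append _ k _ _).2 ⟨hpow.1, ?_⟩
        rw [hpow.2]
        exact hchS
      have hFlen : F.length = n := by
        rw [hF, List.length_append, List.length_append, powL_length]
        omega
      have hlastF : lastOf u F = lastOf k S := by
        rw [hF, lastOf_append, hlastP, lastOf_append, hpow.2]
      have hwtF : wt F = wt P + (m : ℤ) * wt C + wt S := by
        rw [hF, wt_append, wt_append, powL_wt]
        ring
      have hClen : 1 ≤ C.length := List.length_pos_iff.mpr hC.1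
      have hElem : schemeElem (toU 1 0 u P) (toU 1 0 k C) (toU 1 0 k S) m
          = toU 1 0 u F := by
        unfold schemeElem
        rw [pow_toU, glue_toU, glue_toU]
      refine ⟨toU 1 0 u P, toU 1 0 k C, toU 1 0 k S, m, ?_, ?_, ?_, ?_⟩
      · refine ⟨Or.inr ⟨?_, ?_⟩, ?_, ?_, ?_⟩
        · exact essential_of _ k C (toU_varList 1 0 k C) hC.2.2.2 hC.2.2.1 hC.1
        · constructor
          · rw [toU_last]
            show (0 : ℤ) ≠ 0 + 1 * (C.length : ℤ)
            have : (1 : ℤ) ≤ (C.length : ℤ) := by exact_mod_cast hClen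
            omega
          · rw [toU_last]
            exact hC.2.2.1.symm
        · rw [toU_last]
          exact hlastP.symm
        · rw [toU_last]
          exact hC.2.2.1.symm
        · rw [glue_toU, glue_toU]
          apply List.ne_nil_of_length_pos
          rw [toU_steps, posify_length, List.length_append, List.length_append]
          omega
      · rw [toU_steps, toU_steps, posify_length, posify_length]
        exact hPS
      · rw [hElem]
        apply inUnfN_fw R n F u 0 hchainF le_rfl
        rw [hFlen]
        omega
      · rw [hElem]
        refine ⟨?_, ?_, ?_⟩
        · show ((0 : ℤ), u) = ρ.first
          have : ρ.first = ((0 : ℤ), ρ.first.2) := by rw [← hfirst0.1]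
          rw [this]
        · rw [toU_last, hlast', hlastF, hlastS]
          have h1 : (0 : ℤ) + 1 * (F.length : ℤ) = ρ.first.1 + 1 * (l.length : ℤ) := by
            rw [hfirst0.1, hFlen]
            rw [show (l.length : ℤ) = (n : ℤ) from hfirst0.2]
          rw [h1]
        · rw [toU_weight, hwtF]
          have : ρ.weight = wt l := by
            rw [hl, deU_wt]
            rfl
          rw [this]
          exact hwt4
    · -- BACKWARD case
      obtain ⟨hpos, hch⟩ := conv_bw R hBw n ρ.steps ρ.first hρ
      set l : List (St N) := deU ρ.steps with hl
      set u : Fin N := ρ.first.2 with hu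
      have hrho : ρ = toU (-1) ρ.first.1 u l := by
        show ρ = ⟨(ρ.first.1, ρ.first.2), posify (-1) ρ.first.1 l⟩
        rw [← hpos]
      have hlast' : ρ.last = (ρ.first.1 + (-1) * (l.length : ℤ), lastOf u l) := by
        conv_lhs => rw [hrho]
        exact toU_last (-1) l ρ.first.1 u
      have hlast1 : ρ.last.1 = ρ.first.1 - (l.length : ℤ) := by rw [hlast']; ring_nf
      have hllen : l.length = ρ.steps.length := deU_length ρ.steps
      have hlpos : 1 ≤ l.length := by
        rw [hllen]
        have := List.length_pos_iff.mpr hne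
        omega
      have hfirstn : ρ.first.1 = (n : ℤ) ∧ (l.length : ℤ) = (n : ℤ) := by
        obtain ⟨h1, h2⟩ := hext
        have hl1 : (1 : ℤ) ≤ (l.length : ℤ) := by exact_mod_cast hlpos
        have hn1 : (1 : ℤ) ≤ (n : ℤ) := by exact_mod_cast hn
        rcases h1 with h1 | h1 <;> rcases h2 with h2 | h2 <;> omega
      have hlenn : l.length = n := by exact_mod_cast hfirstn.2
      have hB : ∀ i j w, Ebw R i j w → |w| ≤ (Bn : ℤ) := by
        intro i j w hw
        have h1 : w.natAbs ≤ Bn := Finset.le_sup (f := fun a : Atom N => a.2.2.natAbs) hw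
        calc |w| = (w.natAbs : ℤ) := Int.abs_eq_natAbs w
        _ ≤ (Bn : ℤ) := by exact_mod_cast h1
      obtain ⟨P, C, S, k, m, hlastP, hC, hchP, hchS, hlastS, hPS, hlen4, hwt4⟩ :=
        core (Ebw R) hN hB u l hch (by omega)
      have hpow := powL_chain (Ebw R) k C hC.2.1 hC.2.2.1 m
      set F : List (St N) := P ++ (powL C m ++ S) with hF
      have hchainF : AChain (Ebw R) u F := by
        refine (AChain_append _ u P _).2 ⟨hchP, ?_⟩
        rw [hlastP]
        refine (AChain_append _ k _ _).2 ⟨hpow.1, ?_⟩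
        rw [hpow.2]
        exact hchS
      have hFlen : F.length = n := by
        rw [hF, List.length_append, List.length_append, powL_length]
        omega
      have hlastF : lastOf u F = lastOf k S := by
        rw [hF, lastOf_append, hlastP, lastOf_append, hpow.2]
      have hwtF : wt F = wt P + (m : ℤ) * wt C + wt S := by
        rw [hF, wt_append, wt_append, powL_wt]
        ring
      have hClen : 1 ≤ C.length := List.length_pos_iff.mpr hC.1
      have hElem : schemeElem (toU (-1) (n : ℤ) u P) (toU (-1) 0 k C) (toU (-1) 0 k S) m
          = toU (-1) (n : ℤ) u F := by
        unfold schemeElem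
        rw [pow_toU, glue_toU, glue_toU]
      refine ⟨toU (-1) (n : ℤ) u P, toU (-1) 0 k C, toU (-1) 0 k S, m, ?_, ?_, ?_, ?_⟩
      · refine ⟨Or.inr ⟨?_, ?_⟩, ?_, ?_, ?_⟩
        · exact essential_of _ k C (toU_varList (-1) 0 k C) hC.2.2.2 hC.2.2.1 hC.1
        · constructor
          · rw [toU_last]
            show (0 : ℤ) ≠ 0 + (-1) * (C.length : ℤ)
            have : (1 : ℤ) ≤ (C.length : ℤ) := by exact_mod_cast hClen
            omega
          · rw [toU_last]
            exact hC.2.2.1.symm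
        · rw [toU_last]
          exact hlastP.symm
        · rw [toU_last]
          exact hC.2.2.1.symm
        · rw [glue_toU, glue_toU]
          apply List.ne_nil_of_length_pos
          rw [toU_steps, posify_length, List.length_append, List.length_append]
          omega
      · rw [toU_steps, toU_steps, posify_length, posify_length]
        exact hPS
      · rw [hElem]
        apply inUnfN_bw R n F u (n : ℤ) hchainF
        · rw [hFlen]
        · omega
      · rw [hElem]
        refine ⟨?_, ?_, ?_⟩
        · show ((n : ℤ), u) = ρ.first
          have : ρ.first = ((n : ℤ), ρ.first.2) := by rw [← hfirstn.1]
          rw [this]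
        · rw [toU_last, hlast', hlastF, hlastS]
          have h1 : (n : ℤ) + (-1) * (F.length : ℤ) = ρ.first.1 + (-1) * (l.length : ℤ) := by
            rw [hfirstn.1, hFlen]
            rw [show (l.length : ℤ) = (n : ℤ) from hfirstn.2]
          rw [h1]
        · rw [toU_weight, hwtF]
          have : ρ.weight = wt l := by
            rw [hl, deU_wt]
            rfl
          rw [this]
          exact hwt4
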